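/- Let $L_1$ be the line graph on $\{i,j,k\}$ with edges $\{i,j\},\{j,k\}$ and $L_2$ the line graph on $\{r,s,t\}$ with edges $\{r,s\},\{s,t\}$. Let $I=(p_{e,f}: e\in E(L_1), f\in E(L_2))$ in the polynomial ring over a field in the nine variables $x_{ab}$, $a\in\{i,j,k\}$, $b\in\{r,s,t\}$. Then the polynomial $f=x_{it}x_{jr}x_{ks}-x_{ir}x_{js}x_{kt}$ satisfies $f\notin I$ but $f^2\in I$. -/

import Mathlib

open MvPolynomial

private lemma coeff_kill_right {σ K : Type*} [CommSemiring K] [DecidableEq σ]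
    (p : MvPolynomial σ K) (a b : σ) (m : σ →₀ ℕ) (h : m b = 0) :
    coeff m (p * X a * X b) = 0 := by
  rw [coeff_mul_X']
  simp [Finsupp.mem_support_iff, h]

private lemma coeff_kill_left {σ K : Type*} [CommSemiring K] [DecidableEq σ]
    (p : MvPolynomial σ K) (a b : σ) (m : σ →₀ ℕ) (h : m a = 0) :
    coeff m (p * X a * X b) = 0 := by
  rw [mul_right_comm]; exact coeff_kill_right p b a m h

private lemma coeff_extract {σ K : Type*} [CommSemiring K]
    (p : MvPolynomial σ K) (a b : σ) (m' : σ →₀ ℕ) :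
    coeff (m' + Finsupp.single a 1 + Finsupp.single b 1) (p * X a * X b) = coeff m' p := by
  rw [coeff_mul_X, coeff_mul_X]

/-- For the pair of line graphs of length 2 (on vertex sets `{i,j,k}` and `{r,s,t}`,
realized as `Fin 3` with the middle vertex `1`), the ideal `I` generated by the four
adjacent 2-minors does not contain `f = x_{it}x_{jr}x_{ks} - x_{ir}x_{js}x_{kt}`,
but contains `f^2`. -/
theorem stmt1 (K : Type) [Field K] :
    (X (0,2) * X (1,0) * X (2,1) - X (0,0) * X (1,1) * X (2,2) :
        MvPolynomial (Fin 3 × Fin 3) K) ∉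
      Ideal.span ({X (0,0) * X (1,1) - X (0,1) * X (1,0),
                   X (0,1) * X (1,2) - X (0,2) * X (1,1),
                   X (1,0) * X (2,1) - X (1,1) * X (2,0),
                   X (1,1) * X (2,2) - X (1,2) * X (2,1)} :
        Set (MvPolynomial (Fin 3 × Fin 3) K)) ∧
    (X (0,2) * X (1,0) * X (2,1) - X (0,0) * X (1,1) * X (2,2) :
        MvPolynomial (Fin 3 × Fin 3) K) ^ 2 ∈
      Ideal.span ({X (0,0) * X (1,1) - X (0,1) * X (1,0),
                   X (0,1) * X (1,2) - X (0,2) * X (1,1),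
                   X (1,0) * X (2,1) - X (1,1) * X (2,0),
                   X (1,1) * X (2,2) - X (1,2) * X (2,1)} :
        Set (MvPolynomial (Fin 3 × Fin 3) K)) := by
  constructor
  · intro h
    rw [Ideal.mem_span_insert] at h
    obtain ⟨y1, z1, hz1, h1⟩ := h
    rw [Ideal.mem_span_insert] at hz1
    obtain ⟨y2, z2, hz2, h2⟩ := hz1
    rw [Ideal.mem_span_insert] at hz2
    obtain ⟨y3, z3, hz3, h3⟩ := hz2
    rw [Ideal.mem_span_singleton'] at hz3
    obtain ⟨y4, h4⟩ := hz3
    have e : (X (0,2) * X (1,0) * X (2,1) - X (0,0) * X (1,1) * X (2,2) :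
        MvPolynomial (Fin 3 × Fin 3) K)
        = (y1 * X (0,0) * X (1,1) - y1 * X (0,1) * X (1,0))
        + (y2 * X (0,1) * X (1,2) - y2 * X (0,2) * X (1,1))
        + (y3 * X (1,0) * X (2,1) - y3 * X (1,1) * X (2,0))
        + (y4 * X (1,1) * X (2,2) - y4 * X (1,2) * X (2,1)) := by
      rw [h1, h2, h3, ← h4]; ring
    have c1 := congrArg (coeff (Finsupp.single ((0:Fin 3),(2:Fin 3)) 1 + Finsupp.single ((1:Fin 3),(0:Fin 3)) 1 + Finsupp.single ((2:Fin 3),(1:Fin 3)) 1)) e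
    simp only [coeff_add, coeff_sub] at c1
    have hL10 : coeff (Finsupp.single ((0:Fin 3),(2:Fin 3)) 1 + Finsupp.single ((1:Fin 3),(0:Fin 3)) 1 + Finsupp.single ((2:Fin 3),(1:Fin 3)) 1) ((X (0,2) * X (1,0) * X (2,1)) : MvPolynomial (Fin 3 × Fin 3) K) = (1:K) := (coeff_extract _ _ _ _).trans (coeff_X_same _)
    have hL11 : coeff (Finsupp.single ((0:Fin 3),(2:Fin 3)) 1 + Finsupp.single ((1:Fin 3),(0:Fin 3)) 1 + Finsupp.single ((2:Fin 3),(1:Fin 3)) 1) ((X (0,0) * X (1,1) * X (2,2)) : MvPolynomial (Fin 3 × Fin 3) K) = 0 :=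
      coeff_kill_right _ _ _ _ (by simp [Finsupp.single_apply] <;> decide)
    have h10 : coeff (Finsupp.single ((0:Fin 3),(2:Fin 3)) 1 + Finsupp.single ((1:Fin 3),(0:Fin 3)) 1 + Finsupp.single ((2:Fin 3),(1:Fin 3)) 1) (y1 * X (0,0) * X (1,1)) = 0 :=
      coeff_kill_right _ _ _ _ (by simp [Finsupp.single_apply] <;> decide)
    have h11 : coeff (Finsupp.single ((0:Fin 3),(2:Fin 3)) 1 + Finsupp.single ((1:Fin 3),(0:Fin 3)) 1 + Finsupp.single ((2:Fin 3),(1:Fin 3)) 1) (y1 * X (0,1) * X (1,0)) = 0 :=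
      coeff_kill_left _ _ _ _ (by simp [Finsupp.single_apply] <;> decide)
    have h12 : coeff (Finsupp.single ((0:Fin 3),(2:Fin 3)) 1 + Finsupp.single ((1:Fin 3),(0:Fin 3)) 1 + Finsupp.single ((2:Fin 3),(1:Fin 3)) 1) (y2 * X (0,1) * X (1,2)) = 0 :=
      coeff_kill_right _ _ _ _ (by simp [Finsupp.single_apply] <;> decide)
    have h13 : coeff (Finsupp.single ((0:Fin 3),(2:Fin 3)) 1 + Finsupp.single ((1:Fin 3),(0:Fin 3)) 1 + Finsupp.single ((2:Fin 3),(1:Fin 3)) 1) (y2 * X (0,2) * X (1,1)) = 0 :=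
      coeff_kill_right _ _ _ _ (by simp [Finsupp.single_apply] <;> decide)
    have h14 : coeff (Finsupp.single ((0:Fin 3),(2:Fin 3)) 1 + Finsupp.single ((1:Fin 3),(0:Fin 3)) 1 + Finsupp.single ((2:Fin 3),(1:Fin 3)) 1) (y3 * X (1,0) * X (2,1)) = coeff (Finsupp.single ((0:Fin 3),(2:Fin 3)) 1) y3 := coeff_extract _ _ _ _
    have h15 : coeff (Finsupp.single ((0:Fin 3),(2:Fin 3)) 1 + Finsupp.single ((1:Fin 3),(0:Fin 3)) 1 + Finsupp.single ((2:Fin 3),(1:Fin 3)) 1) (y3 * X (1,1) * X (2,0)) = 0 :=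
      coeff_kill_right _ _ _ _ (by simp [Finsupp.single_apply] <;> decide)
    have h16 : coeff (Finsupp.single ((0:Fin 3),(2:Fin 3)) 1 + Finsupp.single ((1:Fin 3),(0:Fin 3)) 1 + Finsupp.single ((2:Fin 3),(1:Fin 3)) 1) (y4 * X (1,1) * X (2,2)) = 0 :=
      coeff_kill_right _ _ _ _ (by simp [Finsupp.single_apply] <;> decide)
    have h17 : coeff (Finsupp.single ((0:Fin 3),(2:Fin 3)) 1 + Finsupp.single ((1:Fin 3),(0:Fin 3)) 1 + Finsupp.single ((2:Fin 3),(1:Fin 3)) 1) (y4 * X (1,2) * X (2,1)) = 0 :=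
      coeff_kill_left _ _ _ _ (by simp [Finsupp.single_apply] <;> decide)
    rw [hL10, hL11, h10, h11, h12, h13, h14, h15, h16, h17] at c1
    have c2 := congrArg (coeff (Finsupp.single ((0:Fin 3),(2:Fin 3)) 1 + Finsupp.single ((1:Fin 3),(1:Fin 3)) 1 + Finsupp.single ((2:Fin 3),(0:Fin 3)) 1)) e
    simp only [coeff_add, coeff_sub] at c2
    have hL20 : coeff (Finsupp.single ((0:Fin 3),(2:Fin 3)) 1 + Finsupp.single ((1:Fin 3),(1:Fin 3)) 1 + Finsupp.single ((2:Fin 3),(0:Fin 3)) 1) ((X (0,2) * X (1,0) * X (2,1)) : MvPolynomial (Fin 3 × Fin 3) K) = 0 :=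
      coeff_kill_right _ _ _ _ (by simp [Finsupp.single_apply] <;> decide)
    have hL21 : coeff (Finsupp.single ((0:Fin 3),(2:Fin 3)) 1 + Finsupp.single ((1:Fin 3),(1:Fin 3)) 1 + Finsupp.single ((2:Fin 3),(0:Fin 3)) 1) ((X (0,0) * X (1,1) * X (2,2)) : MvPolynomial (Fin 3 × Fin 3) K) = 0 :=
      coeff_kill_right _ _ _ _ (by simp [Finsupp.single_apply] <;> decide)
    have h20 : coeff (Finsupp.single ((0:Fin 3),(2:Fin 3)) 1 + Finsupp.single ((1:Fin 3),(1:Fin 3)) 1 + Finsupp.single ((2:Fin 3),(0:Fin 3)) 1) (y1 * X (0,0) * X (1,1)) = 0 :=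
      coeff_kill_left _ _ _ _ (by simp [Finsupp.single_apply] <;> decide)
    have h21 : coeff (Finsupp.single ((0:Fin 3),(2:Fin 3)) 1 + Finsupp.single ((1:Fin 3),(1:Fin 3)) 1 + Finsupp.single ((2:Fin 3),(0:Fin 3)) 1) (y1 * X (0,1) * X (1,0)) = 0 :=
      coeff_kill_right _ _ _ _ (by simp [Finsupp.single_apply] <;> decide)
    have h22 : coeff (Finsupp.single ((0:Fin 3),(2:Fin 3)) 1 + Finsupp.single ((1:Fin 3),(1:Fin 3)) 1 + Finsupp.single ((2:Fin 3),(0:Fin 3)) 1) (y2 * X (0,1) * X (1,2)) = 0 :=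
      coeff_kill_right _ _ _ _ (by simp [Finsupp.single_apply] <;> decide)
    have h23 : coeff (Finsupp.single ((0:Fin 3),(2:Fin 3)) 1 + Finsupp.single ((1:Fin 3),(1:Fin 3)) 1 + Finsupp.single ((2:Fin 3),(0:Fin 3)) 1) (y2 * X (0,2) * X (1,1)) = coeff (Finsupp.single ((2:Fin 3),(0:Fin 3)) 1) y2 := by
      rw [(by abel : (Finsupp.single ((0:Fin 3),(2:Fin 3)) 1 + Finsupp.single ((1:Fin 3),(1:Fin 3)) 1 + Finsupp.single ((2:Fin 3),(0:Fin 3)) 1 : (Fin 3 × Fin 3) →₀ ℕ) = Finsupp.single ((2:Fin 3),(0:Fin 3)) 1 + Finsupp.single ((0:Fin 3),(2:Fin 3)) 1 + Finsupp.single ((1:Fin 3),(1:Fin 3)) 1)]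
      exact (coeff_extract _ _ _ _)
    have h24 : coeff (Finsupp.single ((0:Fin 3),(2:Fin 3)) 1 + Finsupp.single ((1:Fin 3),(1:Fin 3)) 1 + Finsupp.single ((2:Fin 3),(0:Fin 3)) 1) (y3 * X (1,0) * X (2,1)) = 0 :=
      coeff_kill_right _ _ _ _ (by simp [Finsupp.single_apply] <;> decide)
    have h25 : coeff (Finsupp.single ((0:Fin 3),(2:Fin 3)) 1 + Finsupp.single ((1:Fin 3),(1:Fin 3)) 1 + Finsupp.single ((2:Fin 3),(0:Fin 3)) 1) (y3 * X (1,1) * X (2,0)) = coeff (Finsupp.single ((0:Fin 3),(2:Fin 3)) 1) y3 := coeff_extract _ _ _ _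
    have h26 : coeff (Finsupp.single ((0:Fin 3),(2:Fin 3)) 1 + Finsupp.single ((1:Fin 3),(1:Fin 3)) 1 + Finsupp.single ((2:Fin 3),(0:Fin 3)) 1) (y4 * X (1,1) * X (2,2)) = 0 :=
      coeff_kill_right _ _ _ _ (by simp [Finsupp.single_apply] <;> decide)
    have h27 : coeff (Finsupp.single ((0:Fin 3),(2:Fin 3)) 1 + Finsupp.single ((1:Fin 3),(1:Fin 3)) 1 + Finsupp.single ((2:Fin 3),(0:Fin 3)) 1) (y4 * X (1,2) * X (2,1)) = 0 :=
      coeff_kill_right _ _ _ _ (by simp [Finsupp.single_apply] <;> decide)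
    rw [hL20, hL21, h20, h21, h22, h23, h24, h25, h26, h27] at c2
    have c3 := congrArg (coeff (Finsupp.single ((2:Fin 3),(0:Fin 3)) 1 + Finsupp.single ((0:Fin 3),(1:Fin 3)) 1 + Finsupp.single ((1:Fin 3),(2:Fin 3)) 1)) e
    simp only [coeff_add, coeff_sub] at c3
    have hL30 : coeff (Finsupp.single ((2:Fin 3),(0:Fin 3)) 1 + Finsupp.single ((0:Fin 3),(1:Fin 3)) 1 + Finsupp.single ((1:Fin 3),(2:Fin 3)) 1) ((X (0,2) * X (1,0) * X (2,1)) : MvPolynomial (Fin 3 × Fin 3) K) = 0 :=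
      coeff_kill_right _ _ _ _ (by simp [Finsupp.single_apply] <;> decide)
    have hL31 : coeff (Finsupp.single ((2:Fin 3),(0:Fin 3)) 1 + Finsupp.single ((0:Fin 3),(1:Fin 3)) 1 + Finsupp.single ((1:Fin 3),(2:Fin 3)) 1) ((X (0,0) * X (1,1) * X (2,2)) : MvPolynomial (Fin 3 × Fin 3) K) = 0 :=
      coeff_kill_right _ _ _ _ (by simp [Finsupp.single_apply] <;> decide)
    have h30 : coeff (Finsupp.single ((2:Fin 3),(0:Fin 3)) 1 + Finsupp.single ((0:Fin 3),(1:Fin 3)) 1 + Finsupp.single ((1:Fin 3),(2:Fin 3)) 1) (y1 * X (0,0) * X (1,1)) = 0 :=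
      coeff_kill_right _ _ _ _ (by simp [Finsupp.single_apply] <;> decide)
    have h31 : coeff (Finsupp.single ((2:Fin 3),(0:Fin 3)) 1 + Finsupp.single ((0:Fin 3),(1:Fin 3)) 1 + Finsupp.single ((1:Fin 3),(2:Fin 3)) 1) (y1 * X (0,1) * X (1,0)) = 0 :=
      coeff_kill_right _ _ _ _ (by simp [Finsupp.single_apply] <;> decide)
    have h32 : coeff (Finsupp.single ((2:Fin 3),(0:Fin 3)) 1 + Finsupp.single ((0:Fin 3),(1:Fin 3)) 1 + Finsupp.single ((1:Fin 3),(2:Fin 3)) 1) (y2 * X (0,1) * X (1,2)) = coeff (Finsupp.single ((2:Fin 3),(0:Fin 3)) 1) y2 := coeff_extract _ _ _ _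
    have h33 : coeff (Finsupp.single ((2:Fin 3),(0:Fin 3)) 1 + Finsupp.single ((0:Fin 3),(1:Fin 3)) 1 + Finsupp.single ((1:Fin 3),(2:Fin 3)) 1) (y2 * X (0,2) * X (1,1)) = 0 :=
      coeff_kill_right _ _ _ _ (by simp [Finsupp.single_apply] <;> decide)
    have h34 : coeff (Finsupp.single ((2:Fin 3),(0:Fin 3)) 1 + Finsupp.single ((0:Fin 3),(1:Fin 3)) 1 + Finsupp.single ((1:Fin 3),(2:Fin 3)) 1) (y3 * X (1,0) * X (2,1)) = 0 :=
      coeff_kill_right _ _ _ _ (by simp [Finsupp.single_apply] <;> decide)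
    have h35 : coeff (Finsupp.single ((2:Fin 3),(0:Fin 3)) 1 + Finsupp.single ((0:Fin 3),(1:Fin 3)) 1 + Finsupp.single ((1:Fin 3),(2:Fin 3)) 1) (y3 * X (1,1) * X (2,0)) = 0 :=
      coeff_kill_left _ _ _ _ (by simp [Finsupp.single_apply] <;> decide)
    have h36 : coeff (Finsupp.single ((2:Fin 3),(0:Fin 3)) 1 + Finsupp.single ((0:Fin 3),(1:Fin 3)) 1 + Finsupp.single ((1:Fin 3),(2:Fin 3)) 1) (y4 * X (1,1) * X (2,2)) = 0 :=
      coeff_kill_right _ _ _ _ (by simp [Finsupp.single_apply] <;> decide)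
    have h37 : coeff (Finsupp.single ((2:Fin 3),(0:Fin 3)) 1 + Finsupp.single ((0:Fin 3),(1:Fin 3)) 1 + Finsupp.single ((1:Fin 3),(2:Fin 3)) 1) (y4 * X (1,2) * X (2,1)) = 0 :=
      coeff_kill_right _ _ _ _ (by simp [Finsupp.single_apply] <;> decide)
    rw [hL30, hL31, h30, h31, h32, h33, h34, h35, h36, h37] at c3
    exact one_ne_zero (by linear_combination c1 + c2 + c3 : (1:K) = 0)
  · have m1 : (X (0,0) * X (1,1) - X (0,1) * X (1,0) : MvPolynomial (Fin 3 × Fin 3) K) ∈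
        Ideal.span ({X (0,0) * X (1,1) - X (0,1) * X (1,0),
                   X (0,1) * X (1,2) - X (0,2) * X (1,1),
                   X (1,0) * X (2,1) - X (1,1) * X (2,0),
                   X (1,1) * X (2,2) - X (1,2) * X (2,1)} :
        Set (MvPolynomial (Fin 3 × Fin 3) K)) := Ideal.subset_span (by left; rfl)
    have m2 : (X (0,1) * X (1,2) - X (0,2) * X (1,1) : MvPolynomial (Fin 3 × Fin 3) K) ∈
        Ideal.span ({X (0,0) * X (1,1) - X (0,1) * X (1,0),
                   X (0,1) * X (1,2) - X (0,2) * X (1,1),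
                   X (1,0) * X (2,1) - X (1,1) * X (2,0),
                   X (1,1) * X (2,2) - X (1,2) * X (2,1)} :
        Set (MvPolynomial (Fin 3 × Fin 3) K)) := Ideal.subset_span (by right; left; rfl)
    have m3 : (X (1,0) * X (2,1) - X (1,1) * X (2,0) : MvPolynomial (Fin 3 × Fin 3) K) ∈
        Ideal.span ({X (0,0) * X (1,1) - X (0,1) * X (1,0),
                   X (0,1) * X (1,2) - X (0,2) * X (1,1),
                   X (1,0) * X (2,1) - X (1,1) * X (2,0),
                   X (1,1) * X (2,2) - X (1,2) * X (2,1)} :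
        Set (MvPolynomial (Fin 3 × Fin 3) K)) := Ideal.subset_span (by right; right; left; rfl)
    have m4 : (X (1,1) * X (2,2) - X (1,2) * X (2,1) : MvPolynomial (Fin 3 × Fin 3) K) ∈
        Ideal.span ({X (0,0) * X (1,1) - X (0,1) * X (1,0),
                   X (0,1) * X (1,2) - X (0,2) * X (1,1),
                   X (1,0) * X (2,1) - X (1,1) * X (2,0),
                   X (1,1) * X (2,2) - X (1,2) * X (2,1)} :
        Set (MvPolynomial (Fin 3 × Fin 3) K)) := Ideal.subset_span (by right; right; right; rfl)
    have key : (X (0,2) * X (1,0) * X (2,1) - X (0,0) * X (1,1) * X (2,2) :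
        MvPolynomial (Fin 3 × Fin 3) K) ^ 2
        = (X (0,0)*X (1,2)*X (2,1)*X (2,2) - X (0,2)*X (1,2)*X (2,0)*X (2,1)) *
            (X (0,0) * X (1,1) - X (0,1) * X (1,0))
        + (2*X (0,0)*X (1,0)*X (2,1)*X (2,2) - X (0,0)*X (1,2)*X (2,0)*X (2,1)
            - X (0,2)*X (1,0)*X (2,0)*X (2,1)) *
            (X (0,1) * X (1,2) - X (0,2) * X (1,1))
        + (X (0,2)*X (0,2)*X (1,0)*X (2,1) - X (0,0)*X (0,1)*X (1,2)*X (2,2)) *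
            (X (1,0) * X (2,1) - X (1,1) * X (2,0))
        + (X (0,0)*X (0,0)*X (1,1)*X (2,2) - X (0,0)*X (0,1)*X (1,2)*X (2,0)) *
            (X (1,1) * X (2,2) - X (1,2) * X (2,1)) := by
      ring
    rw [key]
    exact add_mem (add_mem (add_mem (Ideal.mul_mem_left _ _ m1) (Ideal.mul_mem_left _ _ m2))
      (Ideal.mul_mem_left _ _ m3)) (Ideal.mul_mem_left _ _ m4)
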